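/- arXiv:1006.3275 — 3 statements merged into one kernel-verified Lean document; each statement's English description precedes it below -/
import Mathlib

section
/- The normalized information distance e(x,y) = max{K(x|y), K(y|x)} / max{K(x), K(y)} is not upper semicomputable. -/
/-- Binary strings. -/
abbrev BStr := List Bool

/-- Canonical encoding of binary strings as natural numbers. -/
def strEnc : BStr → ℕ := Encodable.encode

/-- The fixed universal machine: program `p` (a natural number, decoded as a
partial recursive code) run on input `y`. -/
def univ (p y : ℕ) : Part ℕ := (Denumerable.ofNat Nat.Partrec.Code p).eval y

/-- The length (in bits) of a program. -/
def plen (p : ℕ) : ℕ := Nat.size p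

/-- Conditional Kolmogorov complexity on natural numbers: the length of the
shortest program producing `x` from `y` on the universal machine. -/
noncomputable def Knat (x y : ℕ) : ℕ :=
  sInf {n | ∃ p, plen p = n ∧ univ p y = Part.some x}

/-- Conditional Kolmogorov complexity `K(x|y)` of binary strings. -/
noncomputable def Kcond (x y : BStr) : ℕ := Knat (strEnc x) (strEnc y)

/-- `K(x|n)`: complexity of the string `x` conditioned on the canonical
encoding of the natural number `n`. -/
noncomputable def KcondNat (x : BStr) (n : ℕ) : ℕ := Knat (strEnc x) n

/-- Unconditional Kolmogorov complexity `K(x) = K(x|ε)`. -/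
noncomputable def K (x : BStr) : ℕ := Kcond x []

/-- The information distance `E(x,y) = max{K(x|y), K(y|x)}`. -/
noncomputable def E (x y : BStr) : ℕ := max (Kcond x y) (Kcond y x)

/-- The normalized information distance (NID). -/
noncomputable def NID (x y : BStr) : ℝ :=
  (E x y : ℝ) / (max (K x) (K y) : ℝ)

/-- Time-bounded universal machine: run program `p` on input `y` for at most
`t` steps. -/
def univT (t p y : ℕ) : Option ℕ :=
  Nat.Partrec.Code.evaln t (Denumerable.ofNat Nat.Partrec.Code p) y

/-- Time-bounded conditional Kolmogorov complexity `K^t(x|y)` (with the time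
bound measured in the length of the output `x`); `⊤` if no program succeeds. -/
noncomputable def KcondT (t : ℕ → ℕ) (x y : BStr) : ℕ∞ :=
  sInf {n : ℕ∞ | ∃ p : ℕ, (plen p : ℕ∞) = n ∧
    univT (t x.length) p (strEnc y) = some (strEnc x)}

/-- `K^t(x|n)`: time-bounded complexity conditioned on the natural number `n`. -/
noncomputable def KcondNatT (t : ℕ → ℕ) (x : BStr) (m : ℕ) : ℕ∞ :=
  sInf {n : ℕ∞ | ∃ p : ℕ, (plen p : ℕ∞) = n ∧
    univT (t x.length) p m = some (strEnc x)}

/-- Time-bounded information distance `E^t`. -/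
noncomputable def ET (t : ℕ → ℕ) (x y : BStr) : ℕ∞ :=
  max (KcondT t x y) (KcondT t y x)

/-- A real-valued function on naturals is upper semicomputable if it has a
total computable rational-valued approximation, nonincreasing in the stage,
converging to it. -/
def UpperSemicomputable (f : ℕ → ℝ) : Prop :=
  ∃ φ : ℕ → ℕ → ℚ, Computable₂ φ ∧ (∀ x k, φ x (k + 1) ≤ φ x k) ∧
    ∀ x, Filter.Tendsto (fun k => (φ x k : ℝ)) Filter.atTop (nhds (f x))

/-- Lower semicomputability: `-f` is upper semicomputable. -/
def LowerSemicomputable (f : ℕ → ℝ) : Prop :=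
  UpperSemicomputable (fun x => -f x)

/-- Upper semicomputability for real-valued functions of pairs of strings. -/
def UpperSemicomputable2 (f : BStr → BStr → ℝ) : Prop :=
  ∃ φ : BStr × BStr → ℕ → ℚ, Computable₂ φ ∧
    (∀ x k, φ x (k + 1) ≤ φ x k) ∧
    ∀ x : BStr × BStr,
      Filter.Tendsto (fun k => (φ x k : ℝ)) Filter.atTop (nhds (f x.1 x.2))

/-- Lower semicomputability for real-valued functions of pairs of strings. -/
def LowerSemicomputable2 (f : BStr → BStr → ℝ) : Prop :=
  UpperSemicomputable2 (fun x y => -f x y)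


/-- Upper semicomputability for real-valued functions of strings. -/
def UpperSemicomputableS (f : BStr → ℝ) : Prop :=
  ∃ φ : BStr → ℕ → ℚ, Computable₂ φ ∧ (∀ x k, φ x (k + 1) ≤ φ x k) ∧
    ∀ x, Filter.Tendsto (fun k => (φ x k : ℝ)) Filter.atTop (nhds (f x))

open Encodable Denumerable

namespace NIDpf

/-- natAbs of the integer encoded by `a` via `Equiv.intEquivNat`. -/
def iabs (a : ℕ) : ℕ := a / 2 + a % 2

def memB (k : ℕ) : Bool :=
  decide (0 < k.unpair.2) && (Nat.gcd (iabs k.unpair.1) k.unpair.2 == 1)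

def cnt (n : ℕ) : ℕ := (List.range n).countP memB

/-- The "original" encoding of ℚ from `Rat.instEncodable`. -/
def oEnc (q : ℚ) : ℕ := Nat.pair (Equiv.intEquivNat q.num) q.den

lemma oEnc_eq (q : ℚ) : @encode ℚ Rat.instEncodable q = oEnc q := rfl

lemma intEquivNat_ofNat (n : ℕ) : Equiv.intEquivNat (Int.ofNat n) = 2 * n := rfl

lemma intEquivNat_negSucc (n : ℕ) : Equiv.intEquivNat (Int.negSucc n) = 2 * n + 1 := rfl

lemma iabs_enc (z : ℤ) : iabs (Equiv.intEquivNat z) = z.natAbs := by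
  cases z with
  | ofNat n => rw [intEquivNat_ofNat]; unfold iabs; simp
  | negSucc n => rw [intEquivNat_negSucc]; unfold iabs; simp; omega

lemma neg_enc (z : ℤ) : (Equiv.intEquivNat z) % 2 = 1 ↔ z < 0 := by
  cases z with
  | ofNat n =>
      rw [intEquivNat_ofNat]
      constructor
      · intro h; omega
      · intro h
        exfalso
        have : (0:ℤ) ≤ Int.ofNat n := Int.ofNat_nonneg n
        omega
  | negSucc n =>
      rw [intEquivNat_negSucc]
      constructor
      · intro _; exact Int.negSucc_lt_zero n
      · intro _; omega

lemma mem_range_iff (k : ℕ) :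
    k ∈ Set.range (@encode ℚ Rat.instEncodable) ↔ memB k = true := by
  constructor
  · rintro ⟨q, rfl⟩
    rw [oEnc_eq]
    unfold memB oEnc
    simp only [Nat.unpair_pair]
    rw [iabs_enc]
    simp [q.pos, q.reduced]
  · intro h
    unfold memB at h
    simp only [Bool.and_eq_true, decide_eq_true_eq, beq_iff_eq] at h
    set z : ℤ := Equiv.intEquivNat.symm k.unpair.1 with hz
    have hzk : Equiv.intEquivNat z = k.unpair.1 := Equiv.apply_symm_apply _ _
    have habs : z.natAbs = iabs k.unpair.1 := by rw [← hzk, iabs_enc]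
    refine ⟨⟨z, k.unpair.2, by omega, by rw [Nat.Coprime, habs]; exact h.2⟩, ?_⟩
    rw [oEnc_eq]
    unfold oEnc
    simp only [hzk]
    exact Nat.pair_unpair k

attribute [local instance] Encodable.decidableRangeEncode

lemma encR (q : ℚ) :
    @encode ℚ (Primcodable.toEncodable) q = cnt (oEnc q) := by
  have h0 : @encode ℚ (Primcodable.toEncodable) q =
      (List.range (@encode ℚ Rat.instEncodable q)).countP
        (fun k => decide (k ∈ Set.range (@encode ℚ Rat.instEncodable))) := rfl
  rw [h0, oEnc_eq]
  unfold cnt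
  apply List.countP_congr
  intro k _
  by_cases h : k ∈ Set.range (@encode ℚ Rat.instEncodable)
  · simp [h, (mem_range_iff k).1 h]
  · have hb : memB k = false := by
      by_contra hb
      simp only [Bool.not_eq_false] at hb
      exact h ((mem_range_iff k).2 hb)
    simp [h, hb]

lemma cnt_mono : Monotone cnt := by
  intro a b hab
  unfold cnt
  obtain ⟨c, rfl⟩ := Nat.exists_eq_add_of_le hab
  rw [List.range_add, List.countP_append]
  omega

lemma cnt_strict {k1 k2 : ℕ} (h : memB k1) (hlt : k1 < k2) : cnt k1 < cnt k2 := by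
  have h1 : cnt (k1 + 1) = cnt k1 + 1 := by
    unfold cnt
    rw [List.range_succ, List.countP_append]
    simp [h]
  have h2 := cnt_mono (Nat.succ_le_of_lt hlt)
  rw [Nat.succ_eq_add_one] at h2
  omega

lemma cnt_inj {k1 k2 : ℕ} (h1 : memB k1) (h2 : memB k2) (h : cnt k1 = cnt k2) : k1 = k2 := by
  rcases lt_trichotomy k1 k2 with hl | he | hl
  · exact absurd h (Nat.ne_of_lt (cnt_strict h1 hl))
  · exact he
  · exact absurd h.symm (Nat.ne_of_lt (cnt_strict h2 hl))



noncomputable def pEnc : ℚ → ℕ := @encode ℚ (Primcodable.toEncodable)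

lemma pEnc_eq (q : ℚ) : pEnc q = cnt (oEnc q) := encR q

lemma pEnc_ofNat (n : ℕ) : pEnc (ofNat ℚ n) = n := Denumerable.encode_ofNat n

lemma ofNat_pEnc (q : ℚ) : ofNat ℚ (pEnc q) = q := Denumerable.ofNat_encode q

lemma memB_oEnc (q : ℚ) : memB (oEnc q) = true := by
  rw [← oEnc_eq]
  exact (mem_range_iff _).1 ⟨q, rfl⟩

/-- Search for the `oEnc`-code of the rational with `pEnc`-index `n`. -/
def W (n : ℕ) : Part ℕ := Nat.rfind (fun k => Part.some (memB k && (cnt k == n)))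

lemma W_eq (q : ℚ) : W (pEnc q) = Part.some (oEnc q) := by
  rw [Part.eq_some_iff]
  unfold W
  apply Nat.mem_rfind.2
  constructor
  · rw [Part.mem_some_iff]
    simp [memB_oEnc q, (pEnc_eq q).symm]
  · intro m hm
    rw [Part.mem_some_iff]
    by_contra hf
    have ht : (memB m && (cnt m == pEnc q)) = true := by
      revert hf; cases (memB m && (cnt m == pEnc q)) <;> simp
    simp only [Bool.and_eq_true, beq_iff_eq] at ht
    have := cnt_inj ht.1 (memB_oEnc q) (by rw [ht.2, pEnc_eq])
    omega

lemma W_total (n : ℕ) : W n = Part.some (oEnc (ofNat ℚ n)) := by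
  have := W_eq (ofNat ℚ n)
  rwa [pEnc_ofNat] at this

/-- decide whether the rational coded (via `oEnc`) by `k` is `< 1/(t+1)`. -/
def ltB (k t : ℕ) : Bool :=
  (k.unpair.1 % 2 == 1) || decide (iabs k.unpair.1 * (t + 1) < k.unpair.2)

lemma rat_lt_iff (q : ℚ) (t : ℕ) :
    q < 1 / ((t : ℚ) + 1) ↔ (q.num < 0 ∨ q.num.natAbs * (t + 1) < q.den) := by
  have hT : (0:ℚ) < (t : ℚ) + 1 := by positivity
  have hd : (0:ℚ) < (q.den : ℚ) := by exact_mod_cast q.pos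
  constructor
  · intro h
    by_cases hn : q.num < 0
    · exact Or.inl hn
    · right
      push_neg at hn
      rw [← Rat.num_div_den q, div_lt_div_iff₀ hd hT, one_mul] at h
      have h2 : (q.num : ℚ) * ((t:ℚ)+1) < q.den := h
      have h3 : ((q.num.natAbs : ℤ) : ℚ) * ((t:ℚ)+1) < q.den := by
        rwa [Int.natAbs_of_nonneg hn]
      exact_mod_cast h3
  · intro h
    by_cases hn : q.num < 0
    · have : q < 0 := Rat.num_neg.mp hn
      calc q < 0 := this
        _ < 1 / ((t:ℚ)+1) := by positivity
    · push_neg at hn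
      rcases h with h | h
      · omega
      · rw [← Rat.num_div_den q, div_lt_div_iff₀ hd hT, one_mul]
        rw [← Int.natAbs_of_nonneg hn]
        exact_mod_cast h
    
lemma ltB_oEnc (q : ℚ) (t : ℕ) :
    ltB (oEnc q) t = decide (q < 1 / ((t : ℚ) + 1)) := by
  unfold ltB oEnc
  simp only [Nat.unpair_pair]
  rw [iabs_enc]
  by_cases h : q < 1 / ((t : ℚ) + 1)
  · rw [decide_eq_true h]
    rcases (rat_lt_iff q t).1 h with hn | hn
    · have hm : Equiv.intEquivNat q.num % 2 = 1 := (neg_enc q.num).2 hn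
      simp [hm]
    · simp [hn]
  · rw [decide_eq_false h]
    have hiff := (rat_lt_iff q t).not.1 h
    push_neg at hiff
    have h1 : ¬ (Equiv.intEquivNat q.num % 2 = 1) :=
      fun hc => absurd ((neg_enc q.num).1 hc) (not_lt.2 hiff.1)
    have h2 : ¬ (q.num.natAbs * (t + 1) < q.den) := not_lt.2 hiff.2
    simp [h1, h2]



/-- one step of the Euclidean algorithm -/
def gstep (p : ℕ × ℕ) : ℕ × ℕ := if p.1 = 0 then p else (p.2 % p.1, p.1)

lemma gstep_iter : ∀ f a b, a ≤ f → gstep^[f] (a, b) = (0, Nat.gcd a b) := by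
  intro f
  induction f using Nat.strong_induction_on with
  | _ f IH =>
    intro a b haf
    match f, haf with
    | 0, haf =>
      have ha : a = 0 := Nat.le_zero.1 haf
      subst ha
      simp [Nat.gcd_zero_left]
    | (f+1), haf =>
      rw [Function.iterate_succ_apply]
      by_cases ha : a = 0
      · subst ha
        have : gstep (0, b) = (0, b) := by simp [gstep]
        rw [this, IH f (Nat.lt_succ_self f) 0 b (Nat.zero_le f)]
      · have : gstep (a, b) = (b % a, a) := by simp [gstep, ha]
        rw [this, IH f (Nat.lt_succ_self f) (b % a) a
            (by have := Nat.mod_lt b (Nat.pos_of_ne_zero ha); omega)]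
        rw [Nat.gcd_rec a b]

lemma rec_eq_iterate {σ : Type*} (step : σ → σ) (init : σ) :
    ∀ n, (Nat.rec init (fun _ ih => step ih) n : σ) = step^[n] init := by
  intro n
  induction n with
  | zero => rfl
  | succ n ih => rw [Function.iterate_succ_apply']; exact congrArg step ih

lemma primrec_gstep : Primrec gstep := by
  unfold gstep
  exact Primrec.ite (Primrec.eq.comp Primrec.fst (Primrec.const 0)) Primrec.id
    (Primrec.pair (Primrec.nat_mod.comp Primrec.snd Primrec.fst) Primrec.fst)

lemma primrec_gcd : Primrec₂ Nat.gcd := by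
  have h : Primrec fun p : ℕ × ℕ =>
      ((Nat.rec (motive := fun _ => ℕ × ℕ) p (fun _ ih => gstep ih) p.1 : ℕ × ℕ)).2 := by
    apply Primrec.snd.comp
    exact Primrec.nat_rec' Primrec.fst Primrec.id
      ((primrec_gstep.comp Primrec.snd).comp Primrec.snd).to₂
  apply Primrec₂.mk ?_
  apply h.of_eq
  intro p
  rw [rec_eq_iterate, gstep_iter p.1 p.1 p.2 le_rfl]

lemma primrec_iabs : Primrec iabs := by
  unfold iabs
  exact Primrec.nat_add.comp (Primrec.nat_div.comp Primrec.id (Primrec.const 2))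
    (Primrec.nat_mod.comp Primrec.id (Primrec.const 2))

lemma primrec_memB : Primrec memB := by
  unfold memB
  apply Primrec.and.comp
  · exact (Primrec.nat_lt.comp (Primrec.const 0) (Primrec.snd.comp Primrec.unpair)).decide
  · exact Primrec.beq.comp
      (primrec_gcd.comp (primrec_iabs.comp (Primrec.fst.comp Primrec.unpair))
        (Primrec.snd.comp Primrec.unpair))
      (Primrec.const 1)

lemma foldl_count (l : List ℕ) : ∀ s : ℕ,
    List.foldl (fun s j => s + cond (memB j) 1 0) s l = s + l.countP memB := by
  induction l with
  | nil => intro s; simp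
  | cons a l ih =>
      intro s
      rw [List.foldl_cons, ih, List.countP_cons]
      cases h : memB a <;> simp [h] <;> omega

lemma primrec_cnt : Primrec cnt := by
  have h := Primrec.list_foldl (α := ℕ) (β := ℕ) (σ := ℕ) (f := List.range)
    (g := fun _ => 0) (h := fun _ p => p.1 + cond (memB p.2) 1 0)
    Primrec.list_range (Primrec.const 0)
    ((Primrec.nat_add.comp (Primrec.fst.comp Primrec.snd)
      ((Primrec.cond (primrec_memB.comp (Primrec.snd.comp Primrec.snd))
        (Primrec.const 1) (Primrec.const 0)))).to₂)
  apply h.of_eq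
  intro n
  rw [foldl_count]
  simp [cnt]

lemma primrec_pow : Primrec₂ ((· ^ ·) : ℕ → ℕ → ℕ) := Primrec₂.unpaired'.1 Nat.Primrec.pow

lemma primrec_ltB : Primrec₂ ltB := by
  unfold ltB
  apply Primrec.or.comp
  · exact Primrec.beq.comp
      (Primrec.nat_mod.comp (Primrec.fst.comp (Primrec.unpair.comp Primrec.fst))
        (Primrec.const 2)) (Primrec.const 1)
  · apply PrimrecPred.decide
    apply PrimrecRel.comp Primrec.nat_lt
    · exact Primrec.nat_mul.comp
        (primrec_iabs.comp (Primrec.fst.comp (Primrec.unpair.comp Primrec.fst)))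
        (Primrec.succ.comp Primrec.snd)
    · exact Primrec.snd.comp (Primrec.unpair.comp Primrec.fst)

lemma partrec_W : Partrec W := by
  unfold W
  apply Partrec.rfind
  have hc : Computable₂ fun (n k : ℕ) => memB k && (cnt k == n) :=
    Primrec₂.to_comp ((Primrec.and.comp (primrec_memB.comp Primrec.snd)
      (Primrec.beq.comp (primrec_cnt.comp Primrec.snd) Primrec.fst)).to₂)
  exact hc.partrec₂

open Nat.Partrec Nat.Partrec.Code

lemma strEnc_nil : strEnc [] = 0 := rfl

lemma strEnc_inj : Function.Injective strEnc := Encodable.encode_injective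

lemma univ_encode (c : Nat.Partrec.Code) (y : ℕ) : univ (encode c) y = c.eval y := by
  rw [univ, Denumerable.ofNat_encode]

lemma knat_nonempty (x y : ℕ) :
    {n | ∃ p, plen p = n ∧ univ p y = Part.some x}.Nonempty :=
  ⟨plen (encode (Code.const x)), encode (Code.const x), rfl, by
    rw [univ_encode]; exact eval_const x y⟩

lemma knat_le {x y p : ℕ} (h : univ p y = Part.some x) : Knat x y ≤ plen p :=
  Nat.sInf_le ⟨p, rfl, h⟩

lemma knat_spec (x y : ℕ) : ∃ p, plen p = Knat x y ∧ univ p y = Part.some x :=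
  Nat.sInf_mem (knat_nonempty x y)

lemma knat_pos {x y : ℕ} (hx : x ≠ 0) : 0 < Knat x y := by
  rcases Nat.eq_zero_or_pos (Knat x y) with h | h
  swap
  · exact h
  · exfalso
    obtain ⟨p, hp, hu⟩ := knat_spec x y
    rw [h] at hp
    have hp0 : p = 0 := Nat.size_eq_zero.1 hp
    subst hp0
    have hz : univ 0 y = Part.some 0 := by
      rw [univ, ofNatCode_eq]
      simp only [show ofNatCode 0 = Code.zero from by simp [ofNatCode]]
      rfl
    rw [hz] at hu
    exact hx (Part.some_inj.1 hu.symm)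

lemma K_eq (x : BStr) : K x = Knat (strEnc x) 0 := rfl

lemma K_nil : K [] = 0 := by
  have h : univ (encode Code.zero) 0 = Part.some (strEnc []) := by
    rw [univ_encode]; simp [Code.eval, strEnc_nil]; rfl
  have h2 := knat_le h
  have : plen (encode Code.zero) = 0 := by
    show Nat.size 0 = 0
    exact Nat.size_zero
  rw [K_eq]
  omega

lemma K_pos {x : BStr} (hx : x ≠ []) : 0 < K x := by
  rw [K_eq]
  exact knat_pos (fun h => hx (strEnc_inj (h.trans strEnc_nil.symm)))

lemma Kcond_pos {x : BStr} (hx : x ≠ []) : 0 < Kcond x x :=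
  knat_pos (fun h => hx (strEnc_inj (h.trans strEnc_nil.symm)))

/-- The constant: length of the identity program. -/
def C0 : ℕ := plen (encode Code.id)

lemma Kcond_self_le (x : BStr) : Kcond x x ≤ C0 :=
  knat_le (by rw [univ_encode]; exact eval_id (strEnc x))

lemma K_unbounded (n : ℕ) : ∃ x : BStr, n < K x := by
  by_contra h
  push_neg at h
  have hspec : ∀ x : BStr, ∃ p, plen p = K x ∧ univ p 0 = Part.some (strEnc x) := by
    intro x; exact knat_spec (strEnc x) 0
  choose p hp hu using hspec
  have hlt : ∀ x, p x < 2 ^ n := by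
    intro x
    apply Nat.size_le.1
    calc Nat.size (p x) = K x := hp x
      _ ≤ n := h x
  have hinj : Function.Injective (fun x : BStr => (⟨p x, hlt x⟩ : Fin (2 ^ n))) := by
    intro x1 x2 h12
    simp only [Fin.mk.injEq] at h12
    have := (hu x1).symm.trans (h12 ▸ hu x2)
    exact strEnc_inj (Part.some_inj.1 this)
  haveI : Finite BStr := Finite.of_injective _ hinj
  exact not_finite BStr

/-! code size bounds -/

lemma size_pair_le (a b : ℕ) :
    Nat.size (Nat.pair a b) ≤ 2 * max (Nat.size a) (Nat.size b) := by
  set s := max (Nat.size a) (Nat.size b) with hs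
  have ha : a < 2 ^ s := lt_of_lt_of_le (Nat.lt_size_self a)
    (Nat.pow_le_pow_right (by norm_num) (le_max_left _ _))
  have hb : b < 2 ^ s := lt_of_lt_of_le (Nat.lt_size_self b)
    (Nat.pow_le_pow_right (by norm_num) (le_max_right _ _))
  apply Nat.size_le.2
  have h2 : 2 ^ (2 * s) = 2 ^ s * 2 ^ s := by rw [two_mul, pow_add]
  rw [h2, Nat.pair]
  split
  · nlinarith
  · nlinarith

lemma size_comp_le (f g : Code) :
    Nat.size (encodeCode (Code.comp f g)) ≤
      2 * max (Nat.size (encodeCode f)) (Nat.size (encodeCode g)) + 4 := by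
  set s := max (Nat.size (encodeCode f)) (Nat.size (encodeCode g)) with hs
  have hp : Nat.pair (encodeCode f) (encodeCode g) < 2 ^ (2 * s) :=
    Nat.size_le.1 (size_pair_le _ _)
  apply Nat.size_le.2
  show 2 * (2 * Nat.pair (encodeCode f) (encodeCode g) + 1) + 4 < 2 ^ (2 * s + 4)
  have : 2 ^ (2 * s + 4) = 16 * 2 ^ (2 * s) := by rw [pow_add]; ring
  rw [this]
  have h1 : (1:ℕ) ≤ 2 ^ (2 * s) := Nat.one_le_two_pow
  omega

lemma size_const_le : ∀ m, Nat.size (encodeCode (Code.const m)) + 4 ≤ 8 * 2 ^ m := by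
  intro m
  induction m with
  | zero =>
      have : encodeCode (Code.const 0) = 0 := rfl
      rw [this]
      simp [Nat.size_eq_zero.2 rfl]
  | succ m ih =>
      have h1 : Code.const (m + 1) = Code.comp Code.succ (Code.const m) := rfl
      rw [h1]
      have h2 := size_comp_le Code.succ (Code.const m)
      have h3 : Nat.size (encodeCode Code.succ) = 1 := by
        show Nat.size 1 = 1
        simp [Nat.size_one]
      rw [h3] at h2
      have h4 : 2 ^ (m + 1) = 2 * 2 ^ m := by rw [pow_succ]; ring
      rcases Nat.le_total 1 (Nat.size (encodeCode (Code.const m))) with hc | hc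
      · rw [max_eq_right hc] at h2
        omega
      · rw [max_eq_left hc] at h2
        have h5 : (1:ℕ) ≤ 2 ^ m := Nat.one_le_two_pow
        omega

end NIDpf
namespace NIDpf

def TT (m : ℕ) : ℕ := 2 ^ (m + 10)

noncomputable def Pm (φ : BStr × BStr → ℕ → ℚ) (m j : ℕ) : Part Bool :=
  Option.casesOn (Encodable.decode₂ BStr j.unpair.1) (Part.some false)
    (fun x => (W (pEnc (φ (x, x) j.unpair.2))).map
      (fun k => ltB k (TT m) && !(j.unpair.1 == 0)))

lemma Pm_partrec {φ : BStr × BStr → ℕ → ℚ} (hφ : Computable₂ φ) : Partrec₂ (Pm φ) := by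
  have ho : Computable (fun p : ℕ × ℕ => Encodable.decode₂ BStr p.2.unpair.1) :=
    (Primrec.decode₂.comp (Primrec.fst.comp (Primrec.unpair.comp Primrec.snd))).to_comp
  have hq : Computable (fun pp : (ℕ × ℕ) × BStr => pEnc (φ (pp.2, pp.2) pp.1.2.unpair.2)) := by
    unfold pEnc
    exact Computable.encode.comp
      (hφ.comp (Computable.pair Computable.snd Computable.snd)
        ((Primrec.snd.comp (Primrec.unpair.comp (Primrec.snd.comp Primrec.fst))).to_comp))
  have hbool : Computable₂ (fun (pp : (ℕ × ℕ) × BStr) (k : ℕ) =>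
      ltB k (TT pp.1.1) && !(pp.1.2.unpair.1 == 0)) := by
    apply Primrec₂.to_comp
    apply Primrec₂.mk
    apply Primrec.and.comp
    · apply primrec_ltB.comp Primrec.snd
      unfold TT
      exact primrec_pow.comp (Primrec.const 2)
        (Primrec.nat_add.comp (Primrec.fst.comp (Primrec.fst.comp Primrec.fst))
          (Primrec.const 10))
    · exact Primrec.not.comp (Primrec.beq.comp
        (Primrec.fst.comp (Primrec.unpair.comp
          (Primrec.snd.comp (Primrec.fst.comp Primrec.fst)))) (Primrec.const 0))
  have hg : Partrec fun (q : (ℕ × ℕ) × BStr) =>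
      (W (pEnc (φ (q.2, q.2) q.1.2.unpair.2))).map
        (fun k => ltB k (TT q.1.1) && !(q.1.2.unpair.1 == 0)) :=
    Partrec.map (partrec_W.comp hq) hbool
  exact Partrec.optionCasesOn_right ho (Computable.const false) hg

lemma Pm_none {φ : BStr × BStr → ℕ → ℚ} {m j : ℕ}
    (h : Encodable.decode₂ BStr j.unpair.1 = none) : Pm φ m j = Part.some false := by
  unfold Pm; rw [h]

lemma Pm_some {φ : BStr × BStr → ℕ → ℚ} {m j : ℕ} {x : BStr}
    (h : Encodable.decode₂ BStr j.unpair.1 = some x) :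
    Pm φ m j = Part.some
      (decide (φ (x, x) j.unpair.2 < 1 / ((TT m : ℚ) + 1)) && !(j.unpair.1 == 0)) := by
  unfold Pm
  rw [h]
  show (W (pEnc (φ (x, x) j.unpair.2))).map _ = _
  rw [W_eq, Part.map_some, ltB_oEnc]

lemma Pm_dom (φ : BStr × BStr → ℕ → ℚ) (m j : ℕ) : (Pm φ m j).Dom := by
  cases h : Encodable.decode₂ BStr j.unpair.1 with
  | none => rw [Pm_none h]; trivial
  | some x => rw [Pm_some h]; trivial

lemma NID_diag (x : BStr) : NID x x = (Kcond x x : ℝ) / (K x : ℝ) := by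
  unfold NID E
  rw [max_self, max_self]

lemma NID_le_phi {φ : BStr × BStr → ℕ → ℚ} (hmono : ∀ x k, φ x (k + 1) ≤ φ x k)
    (hlim : ∀ x : BStr × BStr,
      Filter.Tendsto (fun k => (φ x k : ℝ)) Filter.atTop (nhds (NID x.1 x.2)))
    (p : BStr × BStr) (k : ℕ) : NID p.1 p.2 ≤ (φ p k : ℝ) := by
  have hanti : Antitone (fun j => φ p j) := antitone_nat_of_succ_le (fun n => hmono p n)
  apply le_of_tendsto (hlim p)
  filter_upwards [Filter.eventually_ge_atTop k] with j hj
  exact_mod_cast hanti hj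

end NIDpf

theorem NID_not_upperSemicomputable :
    ¬ UpperSemicomputable2 NID := by
  open NIDpf Nat.Partrec Nat.Partrec.Code in
  rintro ⟨φ, hφ, hmono, hlim⟩
  -- existence of a witness for the unbounded search, for every m
  have hex : ∀ m, ∃ j, true ∈ NIDpf.Pm φ m j := by
    intro m
    obtain ⟨x0, hx0⟩ := NIDpf.K_unbounded (NIDpf.C0 * (NIDpf.TT m + 1))
    have hx0ne : x0 ≠ [] := by
      intro he
      rw [he, NIDpf.K_nil] at hx0
      omega
    have hKpos : (0:ℝ) < (K x0 : ℝ) := by exact_mod_cast NIDpf.K_pos hx0ne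
    have hTpos : (0:ℝ) < (NIDpf.TT m : ℝ) + 1 := by positivity
    have hNID : NID x0 x0 < 1 / ((NIDpf.TT m : ℝ) + 1) := by
      rw [NIDpf.NID_diag]
      have h1 : (Kcond x0 x0 : ℝ) ≤ (NIDpf.C0 : ℝ) := by
        exact_mod_cast NIDpf.Kcond_self_le x0
      have h2 : (NIDpf.C0 : ℝ) * ((NIDpf.TT m : ℝ) + 1) < (K x0 : ℝ) := by
        exact_mod_cast hx0
      calc (Kcond x0 x0 : ℝ) / (K x0 : ℝ) ≤ (NIDpf.C0 : ℝ) / (K x0 : ℝ) := by gcongr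
        _ < 1 / ((NIDpf.TT m : ℝ) + 1) := by
            rw [div_lt_div_iff₀ hKpos hTpos]; linarith
    obtain ⟨k, hk⟩ := ((hlim (x0, x0)).eventually (gt_mem_nhds hNID)).exists
    refine ⟨Nat.pair (strEnc x0) k, ?_⟩
    have hdec : Encodable.decode₂ BStr (Nat.pair (strEnc x0) k).unpair.1 = some x0 := by
      rw [Nat.unpair_pair]
      exact Encodable.decode₂_encode x0
    rw [NIDpf.Pm_some hdec, Part.mem_some_iff]
    have hq : φ (x0, x0) k < 1 / ((NIDpf.TT m : ℚ) + 1) := by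
      have hcast : ((1 / ((NIDpf.TT m : ℚ) + 1) : ℚ) : ℝ) = 1 / ((NIDpf.TT m : ℝ) + 1) := by
        push_cast; ring
      rw [← Rat.cast_lt (K := ℝ), hcast]
      exact hk
    have hsne : strEnc x0 ≠ 0 := fun h =>
      hx0ne (NIDpf.strEnc_inj (h.trans NIDpf.strEnc_nil.symm))
    simp only [Nat.unpair_pair]
    rw [decide_eq_true hq]
    simp [hsne]
  -- domain of the search
  have rdom : ∀ m, (Nat.rfind (NIDpf.Pm φ m)).Dom := by
    intro m
    obtain ⟨j, hj⟩ := hex m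
    exact Nat.rfind_dom.2 ⟨j, hj, fun {k} _ => NIDpf.Pm_dom φ m k⟩
  set jf : ℕ → ℕ := fun m => (Nat.rfind (NIDpf.Pm φ m)).get (rdom m) with hjf
  set G : ℕ → ℕ := fun m => (jf m).unpair.1 with hG
  have hRpart : Partrec (fun m : ℕ => (Nat.rfind (NIDpf.Pm φ m)).map (fun j => j.unpair.1)) :=
    Partrec.map (Partrec.rfind (NIDpf.Pm_partrec hφ))
      ((Primrec.fst.comp (Primrec.unpair.comp Primrec.snd)).to_comp.to₂)
  have hGcomp : Computable G :=
    Partrec.of_eq_tot hRpart (fun m => Part.mem_map _ (Part.get_mem (rdom m)))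
  -- properties of the found string
  have hfound : ∀ m, ∃ x : BStr, strEnc x = G m ∧ x ≠ [] ∧ NIDpf.TT m + 1 < K x := by
    intro m
    have hj0 : jf m ∈ Nat.rfind (NIDpf.Pm φ m) := Part.get_mem _
    have hsp := Nat.rfind_spec hj0
    cases hdec : Encodable.decode₂ BStr (jf m).unpair.1 with
    | none =>
        rw [NIDpf.Pm_none hdec, Part.mem_some_iff] at hsp
        exact absurd hsp (by simp)
    | some x =>
        rw [NIDpf.Pm_some hdec, Part.mem_some_iff] at hsp
        have hsp' := hsp.symm
        simp only [Bool.and_eq_true, decide_eq_true_eq, Bool.not_eq_true',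
          beq_eq_false_iff_ne] at hsp'
        obtain ⟨hlt, hne0⟩ := hsp'
        have hxd : x ∈ Encodable.decode₂ BStr (jf m).unpair.1 := Option.mem_def.2 hdec
        have hxe : strEnc x = (jf m).unpair.1 := Encodable.mem_decode₂.1 hxd
        have hxne : x ≠ [] := fun he => hne0 (by rw [← hxe, he, NIDpf.strEnc_nil])
        have h1K : (1:ℝ) ≤ (Kcond x x : ℝ) := by exact_mod_cast NIDpf.Kcond_pos hxne
        have hKpos : (0:ℝ) < (K x : ℝ) := by exact_mod_cast NIDpf.K_pos hxne
        have hTpos : (0:ℝ) < (NIDpf.TT m : ℝ) + 1 := by positivity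
        have hnid_ge : 1 / (K x : ℝ) ≤ NID x x := by
          rw [NIDpf.NID_diag]; gcongr
        have hphile := NIDpf.NID_le_phi hmono hlim (x, x) ((jf m).unpair.2)
        have hcast : ((1 / ((NIDpf.TT m : ℚ) + 1) : ℚ) : ℝ) = 1 / ((NIDpf.TT m : ℝ) + 1) := by
          push_cast; ring
        have hlt' : 1 / (K x : ℝ) < 1 / ((NIDpf.TT m : ℝ) + 1) := by
          refine lt_of_le_of_lt (hnid_ge.trans hphile) ?_
          rw [← hcast]
          exact_mod_cast hlt
        rw [div_lt_div_iff₀ hKpos hTpos] at hlt'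
        have hfin : (NIDpf.TT m : ℝ) + 1 < (K x : ℝ) := by linarith
        exact ⟨x, hxe, hxne, by exact_mod_cast hfin⟩
  -- get a code for G
  obtain ⟨c, hc⟩ := Nat.Partrec.Code.exists_code.1 (Partrec.nat_iff.1 hGcomp)
  set m := Nat.size (Nat.Partrec.Code.encodeCode c) with hm
  obtain ⟨x, hxG, hxne, hxK⟩ := hfound m
  -- upper bound on K x via the program comp c (const m)
  have heval : univ (Encodable.encode (Nat.Partrec.Code.comp c (Nat.Partrec.Code.const m)))
      (strEnc []) = Part.some (strEnc x) := by
    rw [NIDpf.univ_encode, NIDpf.strEnc_nil]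
    show ((Nat.Partrec.Code.const m).eval 0).bind c.eval = _
    rw [Nat.Partrec.Code.eval_const]; refine (Part.bind_some m c.eval).trans ?_; rw [hc]
    show Part.some (G m) = _
    rw [hxG]
  have hKle : K x ≤ plen (Encodable.encode
      (Nat.Partrec.Code.comp c (Nat.Partrec.Code.const m))) := by
    rw [NIDpf.K_eq, ← NIDpf.strEnc_nil]
    exact NIDpf.knat_le heval
  have hsz : plen (Encodable.encode
      (Nat.Partrec.Code.comp c (Nat.Partrec.Code.const m))) < NIDpf.TT m := by
    show Nat.size (Encodable.encode _) < NIDpf.TT m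
    rw [Nat.Partrec.Code.encodeCode_eq]
    have h1 := NIDpf.size_comp_le c (Nat.Partrec.Code.const m)
    have h2 := NIDpf.size_const_le m
    have h3 : m < 2 ^ m := Nat.lt_two_pow_self (n := m)
    have h4 : NIDpf.TT m = 1024 * 2 ^ m := by
      unfold NIDpf.TT
      rw [pow_add]; ring
    have h5 : max (Nat.size (Nat.Partrec.Code.encodeCode c))
        (Nat.size (Nat.Partrec.Code.encodeCode (Nat.Partrec.Code.const m))) ≤ 8 * 2 ^ m := by
      apply max_le
      · rw [← hm]; omega
      · omega
    omega
  omega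
end

section
/- For every length n and computable time bound t there exist strings u and v of length n such that K(v) ≥ n - c₁, K(v|u) ≥ n - c₂, K(u|n) ≤ c₂, and K^t(u|v) ≥ n - c₁·log n - c₂, where c₁ is a constant independent of t and n, and c₂ depends on t but not on n. -/
namespace LemmaOne

def pcnt (m : ℕ) (P : ℕ → Bool) : ℕ :=
  ((List.range m).filterMap fun k => bif P k then some k else none).length

def plog (n : ℕ) : ℕ := pcnt n (fun k => decide (2 ^ (k + 1) ≤ n))
def pM (n : ℕ) : ℕ := 2 ^ (n - plog n - 1)
def pR (n : ℕ) : ℕ := 2 ^ 2 ^ (n + 2)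

def isStr (n k : ℕ) : Bool :=
  (Encodable.decode (α := BStr) k).casesOn false
    (fun w => decide (strEnc w = k) && decide (w.length = n))

def hit (n T k' k : ℕ) : Bool :=
  decide (0 < pcnt (pM n) (fun p => decide (univT T p k' = some k)))

def badC (n T k : ℕ) : ℕ := pcnt (pR n) (fun k' => isStr n k' && hit n T k' k)

def good (n T k : ℕ) : Bool := isStr n k && decide (badC n T k ≤ pM n)

open Primrec

lemma primrec_pow : Primrec₂ ((· ^ ·) : ℕ → ℕ → ℕ) := Primrec₂.unpaired'.1 Nat.Primrec.pow

lemma primrec_and : Primrec₂ ((· && ·) : Bool → Bool → Bool) := Primrec.dom_bool₂ _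

lemma primrec_pcnt {α} [Primcodable α] {m : α → ℕ} {P : α → ℕ → Bool}
    (hm : Primrec m) (hP : Primrec₂ P) : Primrec fun a => pcnt (m a) (P a) :=
  list_length.comp <| listFilterMap (list_range.comp hm) <|
    (Primrec.cond hP (option_some.comp snd) (const none)).to₂
-- note: hP : Primrec₂ P is Primrec fun p : α × ℕ => P p.1 p.2 -- check usable for cond

lemma primrec_plog : Primrec plog :=
  primrec_pcnt Primrec.id <|
    (Primrec.nat_le.comp (primrec_pow.comp (const 2) (succ.comp snd)) fst).decide

lemma primrec_pM : Primrec pM :=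
  primrec_pow.comp (const 2) (nat_sub.comp (nat_sub.comp Primrec.id primrec_plog) (const 1))

lemma primrec_pR : Primrec pR :=
  primrec_pow.comp (const 2) (primrec_pow.comp (const 2) (nat_add.comp .id (const 2)))

lemma primrec_isStr : Primrec₂ isStr := by
  have h1 : Primrec fun x : (ℕ × ℕ) × BStr => decide (strEnc x.2 = x.1.2) :=
    (Primrec.eq.comp (Primrec.encode.comp snd) (snd.comp fst)).decide
  have h2 : Primrec fun x : (ℕ × ℕ) × BStr => decide (x.2.length = x.1.1) :=
    (Primrec.eq.comp (list_length.comp snd) (fst.comp fst)).decide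
  have h3 : Primrec fun x : (ℕ × ℕ) × BStr =>
      (decide (strEnc x.2 = x.1.2) && decide (x.2.length = x.1.1)) :=
    primrec_and.comp h1 h2
  exact Primrec.option_casesOn (Primrec.decode.comp snd) (const false) h3.to₂

lemma primrec_univT : Primrec fun x : (ℕ × ℕ) × ℕ => univT x.1.1 x.1.2 x.2 := by
  have h : Primrec fun x : (ℕ × ℕ) × ℕ =>
      ((x.1.1, Denumerable.ofNat Nat.Partrec.Code x.1.2), x.2) :=
    ((fst.comp fst).pair ((Primrec.ofNat _).comp (snd.comp fst))).pair snd
  exact Nat.Partrec.Code.primrec_evaln.comp h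

lemma primrec_hit : Primrec fun x : ((ℕ × ℕ) × ℕ) × ℕ => hit x.1.1.1 x.1.1.2 x.2 x.1.2 := by
  have hP : Primrec fun y : (((ℕ × ℕ) × ℕ) × ℕ) × ℕ =>
      decide (univT y.1.1.1.2 y.2 y.1.2 = some y.1.1.2) := by
    have hu : Primrec fun y : (((ℕ × ℕ) × ℕ) × ℕ) × ℕ => univT y.1.1.1.2 y.2 y.1.2 :=
      primrec_univT.comp
        ((((snd.comp (fst.comp (fst.comp fst))).pair snd).pair (snd.comp fst)))
    exact (Primrec.eq.comp hu (option_some.comp (snd.comp (fst.comp fst)))).decide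
  have hc : Primrec fun x : ((ℕ × ℕ) × ℕ) × ℕ =>
      pcnt (pM x.1.1.1) (fun p => decide (univT x.1.1.2 p x.2 = some x.1.2)) :=
    primrec_pcnt (primrec_pM.comp (fst.comp (fst.comp fst))) hP.to₂
  exact (Primrec.nat_lt.comp (const 0) hc).decide

lemma primrec_good : Primrec fun x : (ℕ × ℕ) × ℕ => good x.1.1 x.1.2 x.2 := by
  have hbP : Primrec fun y : ((ℕ × ℕ) × ℕ) × ℕ =>
      (isStr y.1.1.1 y.2 && hit y.1.1.1 y.1.1.2 y.2 y.1.2) :=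
    primrec_and.comp (primrec_isStr.comp (fst.comp (fst.comp fst)) snd) primrec_hit
  have hb : Primrec fun x : (ℕ × ℕ) × ℕ => badC x.1.1 x.1.2 x.2 :=
    primrec_pcnt (primrec_pR.comp (fst.comp fst)) hbP.to₂
  exact primrec_and.comp (primrec_isStr.comp (fst.comp fst) snd)
    (Primrec.nat_le.comp hb (primrec_pM.comp (fst.comp fst))).decide


lemma strEnc_inj : Function.Injective strEnc := Encodable.encode_injective

lemma pcnt_eq_card (m : ℕ) (P : ℕ → Bool) :
    pcnt m P = ((Finset.range m).filter (fun k => P k = true)).card := by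
  induction m with
  | zero => rfl
  | succ m ih =>
    rw [Finset.range_add_one, Finset.filter_insert]
    unfold pcnt at *
    rw [List.range_succ, List.filterMap_append]
    simp only [List.length_append]
    by_cases h : P m = true
    · rw [if_pos h, Finset.card_insert_of_notMem (by simp)]
      simp [h, ih]
    · rw [if_neg h]
      simp [h, ih, Bool.eq_false_iff.2 h]

lemma pcnt_pos_iff {m : ℕ} {P : ℕ → Bool} : 0 < pcnt m P ↔ ∃ p < m, P p = true := by
  rw [pcnt_eq_card, Finset.card_pos, Finset.filter_nonempty_iff]
  constructor
  · rintro ⟨p, hp, h⟩; exact ⟨p, Finset.mem_range.1 hp, h⟩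
  · rintro ⟨p, hp, h⟩; exact ⟨p, Finset.mem_range.2 hp, h⟩

lemma plog_eq (n : ℕ) : plog n = Nat.log 2 n := by
  unfold plog
  rw [pcnt_eq_card]
  rcases Nat.eq_zero_or_pos n with h | h
  · subst h; simp
  have heq : (Finset.range n).filter (fun k => decide (2 ^ (k + 1) ≤ n) = true)
      = Finset.range (Nat.log 2 n) := by
    ext k
    simp only [Finset.mem_filter, Finset.mem_range, decide_eq_true_eq]
    constructor
    · rintro ⟨-, hk⟩
      exact Nat.lt_of_succ_le ((Nat.le_log_iff_pow_le one_lt_two h.ne').2 hk)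
    · intro hk
      have h2 : 2 ^ (k + 1) ≤ n := (Nat.le_log_iff_pow_le one_lt_two h.ne').1 hk
      have h3 : k < 2 ^ (k + 1) := lt_of_lt_of_le (Nat.lt_succ_self k)
        (Nat.le_of_lt Nat.lt_two_pow_self)
      exact ⟨lt_of_lt_of_le h3 h2, h2⟩
  rw [heq, Finset.card_range]

lemma enc_bound (w : BStr) : strEnc w + 2 ≤ 2 ^ 2 ^ (w.length + 2) := by
  induction w with
  | nil =>
    have : strEnc ([] : BStr) = 0 := rfl
    simp [this]
  | cons a l ih =>
    have hcons : strEnc (a :: l) = Nat.pair (Encodable.encode a) (strEnc l) + 1 := rfl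
    have ha : Encodable.encode a ≤ 1 := by cases a <;> decide
    have hpair : Nat.pair (Encodable.encode a) (strEnc l) ≤ (strEnc l) * (strEnc l) + 3 := by
      rw [Nat.pair]
      split_ifs with h
      · nlinarith
      · nlinarith [Nat.not_lt.1 h]
    have hC : (4:ℕ) ≤ 2 ^ 2 ^ (l.length + 2) := by
      calc (4:ℕ) = 2 ^ 2 := rfl
      _ ≤ 2 ^ 2 ^ (l.length + 2) := Nat.pow_le_pow_right (by norm_num)
          (by calc (2:ℕ) = 2^1 := rfl
              _ ≤ 2 ^ (l.length + 2) := Nat.pow_le_pow_right (by norm_num) (by omega))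
    have hsq : 2 ^ 2 ^ ((a :: l).length + 2) = (2 ^ 2 ^ (l.length + 2)) ^ 2 := by
      rw [← pow_mul]
      congr 1
    rw [hcons, hsq]
    nlinarith [ih, hC]

lemma strEnc_lt_pR {w : BStr} {n : ℕ} (h : w.length = n) : strEnc w < pR n := by
  have := enc_bound w
  rw [h] at this
  unfold pR
  omega

/-- The finset of strings of length `n`. -/
def Sn (n : ℕ) : Finset BStr :=
  (Finset.univ : Finset (Fin n → Bool)).map ⟨List.ofFn, List.ofFn_injective⟩

lemma mem_Sn {n : ℕ} {w : BStr} : w ∈ Sn n ↔ w.length = n := by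
  simp only [Sn, Finset.mem_map, Finset.mem_univ, true_and, Function.Embedding.coeFn_mk]
  constructor
  · rintro ⟨f, rfl⟩; simp
  · rintro rfl
    exact ⟨fun i => w.get i, List.ofFn_get w⟩

lemma card_Sn (n : ℕ) : (Sn n).card = 2 ^ n := by
  rw [Sn, Finset.card_map, Finset.card_univ]
  simp



open Nat.Partrec (Code)

lemma univ_encode (c : Code) (y : ℕ) : univ (Encodable.encode c) y = c.eval y := by
  unfold univ
  rw [Denumerable.ofNat_encode]

lemma Knat_nonempty (x y : ℕ) :
    {n | ∃ p, plen p = n ∧ univ p y = Part.some x}.Nonempty := by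
  refine ⟨plen (Encodable.encode (Code.const x)), Encodable.encode (Code.const x), rfl, ?_⟩
  rw [univ_encode]
  exact Nat.Partrec.Code.eval_const x y

lemma Knat_witness (x y : ℕ) :
    ∃ p, plen p = Knat x y ∧ univ p y = Part.some x :=
  Nat.sInf_mem (Knat_nonempty x y)

lemma Knat_le {x y p : ℕ} (h : univ p y = Part.some x) : Knat x y ≤ plen p :=
  Nat.sInf_le ⟨p, rfl, h⟩

lemma plen_lt_pow {p m : ℕ} (h : plen p < m) : p < 2 ^ (m - 1) := by
  have : Nat.size p ≤ m - 1 := by unfold plen at h; omega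
  exact Nat.size_le.1 this

open Classical in
lemma card_compressible (n m y : ℕ) :
    ((Sn n).filter (fun w => Knat (strEnc w) y < m)).card ≤ 2 ^ (m - 1) := by
  classical
  have hw : ∀ w ∈ (Sn n).filter (fun w => Knat (strEnc w) y < m),
      ∃ p, plen p < m ∧ univ p y = Part.some (strEnc w) := by
    intro w hwmem
    obtain ⟨p, hp, hpu⟩ := Knat_witness (strEnc w) y
    exact ⟨p, by rw [hp]; exact (Finset.mem_filter.1 hwmem).2, hpu⟩
  choose! g hg1 hg2 using hw
  calc ((Sn n).filter (fun w => Knat (strEnc w) y < m)).card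
      ≤ (Finset.range (2 ^ (m - 1))).card := by
        apply Finset.card_le_card_of_injOn g
        · intro w hwmem
          exact Finset.mem_range.2 (plen_lt_pow (hg1 w hwmem))
        · intro w1 h1 w2 h2 heq
          have := (hg2 w1 h1).symm.trans (heq ▸ hg2 w2 h2)
          exact strEnc_inj (by
            have := Part.some_inj.1 this
            exact this)
    _ = 2 ^ (m - 1) := Finset.card_range _

/-- The set of strings `w` of length `n` from which some program shorter than
`pM n` computes `u` within time `T`. -/
noncomputable def Bad (n T : ℕ) (u : BStr) : Finset BStr := by
  classical
  exact (Sn n).filter (fun w => ∃ p < pM n, univT T p (strEnc w) = some (strEnc u))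

lemma mem_Bad {n T : ℕ} {u w : BStr} :
    w ∈ Bad n T u ↔ w ∈ Sn n ∧ ∃ p < pM n, univT T p (strEnc w) = some (strEnc u) := by
  unfold Bad
  exact Finset.mem_filter

lemma exists_small_bad (n T : ℕ) : ∃ u ∈ Sn n, (Bad n T u).card ≤ pM n := by
  classical
  by_contra hcon
  push_neg at hcon
  -- sum of card over u exceeds total pairs
  have hsum : ∀ u ∈ Sn n, pM n + 1 ≤ (Bad n T u).card := fun u hu => hcon u hu
  set G : Finset (BStr × BStr) := (Sn n).biUnion (fun u => (Bad n T u).image (fun w => (u, w)))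
    with hG
  have hcardG : (Sn n).card * (pM n + 1) ≤ G.card := by
    rw [hG, Finset.card_biUnion]
    · rw [← Finset.sum_const_nat (m := pM n + 1) (fun x hx => rfl)]
      apply Finset.sum_le_sum
      intro u hu
      rw [Finset.card_image_of_injective _ (fun a b h => (Prod.ext_iff.1 h).2)]
      exact hsum u hu
    · intro u1 h1 u2 h2 hne
      simp only [Finset.disjoint_left, Finset.mem_image]
      rintro ⟨a, b⟩ ⟨w1, hw1, heq1⟩ ⟨w2, hw2, heq2⟩
      apply hne
      have e1 := (Prod.ext_iff.1 heq1).1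
      have e2 := (Prod.ext_iff.1 heq2).1
      dsimp at e1 e2
      rw [e1, e2]
  have hwit : ∀ q ∈ G, ∃ p < pM n, univT T p (strEnc q.2) = some (strEnc q.1) := by
    rintro ⟨u, w⟩ hq
    rw [hG] at hq
    simp only [Finset.mem_biUnion, Finset.mem_image] at hq
    obtain ⟨u', _, w', hw', heq⟩ := hq
    obtain ⟨h1, h2⟩ := Prod.ext_iff.1 heq
    dsimp at h1 h2
    subst h1; subst h2
    exact ((Finset.mem_filter.1 hw').2 : ∃ p < pM n, _)
  choose! f hf1 hf2 using hwit
  have hinj : Set.InjOn (fun q : BStr × BStr => (f q, q.2)) G := by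
    rintro ⟨u1, w1⟩ h1 ⟨u2, w2⟩ h2 heq
    obtain ⟨hfe, hwe⟩ := Prod.ext_iff.1 heq
    dsimp at hfe hwe
    subst hwe
    have e1 := hf2 _ h1
    have e2 := hf2 _ h2
    rw [hfe] at e1
    rw [e1] at e2
    dsimp at e2
    have heu : strEnc u1 = strEnc u2 := Option.some_inj.1 e2
    rw [strEnc_inj heu]
  have hcard2 : G.card ≤ ((Finset.range (pM n)) ×ˢ (Sn n)).card := by
    apply Finset.card_le_card_of_injOn _ _ hinj
    rintro ⟨u, w⟩ hq
    rw [Finset.mem_coe] at hq ⊢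
    rw [Finset.mem_product]
    constructor
    · exact Finset.mem_range.2 (hf1 _ hq)
    · rw [hG] at hq
      simp only [Finset.mem_biUnion, Finset.mem_image] at hq
      obtain ⟨u', _, w', hw', heq⟩ := hq
      have hw2 := (Prod.ext_iff.1 heq).2
      dsimp at hw2
      subst hw2
      exact Finset.mem_of_mem_filter _ hw'
  rw [Finset.card_product, Finset.card_range, card_Sn] at hcard2
  rw [card_Sn] at hcardG
  have hpos : 0 < 2 ^ n := Nat.pow_pos (by norm_num)
  nlinarith [hcardG.trans hcard2]



lemma isStr_iff {n k : ℕ} : isStr n k = true ↔ ∃ w : BStr, strEnc w = k ∧ w.length = n := by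
  unfold isStr
  rcases hd : (Encodable.decode (α := BStr) k) with - | w
  · simp only [Bool.false_eq_true, false_iff]
    rintro ⟨w, rfl, -⟩
    rw [show strEnc w = Encodable.encode w from rfl, Encodable.encodek] at hd
    cases hd
  · simp only [Bool.and_eq_true, decide_eq_true_eq]
    constructor
    · rintro ⟨h1, h2⟩; exact ⟨w, h1, h2⟩
    · rintro ⟨w', rfl, h2⟩
      rw [show strEnc w' = Encodable.encode w' from rfl, Encodable.encodek] at hd
      cases hd
      exact ⟨rfl, h2⟩

lemma hit_iff {n T k' k : ℕ} : hit n T k' k = true ↔ ∃ p < pM n, univT T p k' = some k := by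
  unfold hit
  rw [decide_eq_true_eq, pcnt_pos_iff]
  simp only [decide_eq_true_eq]

open Classical in
lemma badC_eq (n T : ℕ) (u : BStr) (hu : u.length = n) :
    badC n T (strEnc u) = (Bad n T u).card := by
  classical
  unfold badC
  rw [pcnt_eq_card]
  symm
  apply Finset.card_bij (fun w _ => strEnc w)
  · intro w hw
    obtain ⟨hw1, hw2⟩ := mem_Bad.1 hw
    have hlen : w.length = n := mem_Sn.1 hw1
    rw [Finset.mem_filter]
    refine ⟨Finset.mem_range.2 (strEnc_lt_pR hlen), ?_⟩
    rw [Bool.and_eq_true, isStr_iff, hit_iff]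
    exact ⟨⟨w, rfl, hlen⟩, hw2⟩
  · intro w1 h1 w2 h2 heq
    exact strEnc_inj heq
  · intro k hk
    rw [Finset.mem_filter, Bool.and_eq_true, isStr_iff, hit_iff] at hk
    obtain ⟨-, ⟨w, rfl, hlen⟩, hhit⟩ := hk
    exact ⟨w, mem_Bad.2 ⟨mem_Sn.2 hlen, hhit⟩, rfl⟩

lemma good_exists (n T : ℕ) : ∃ k, good n T k = true := by
  obtain ⟨u, hu, hcard⟩ := exists_small_bad n T
  refine ⟨strEnc u, ?_⟩
  unfold good
  rw [Bool.and_eq_true, isStr_iff, decide_eq_true_eq,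
    badC_eq n T u (mem_Sn.1 hu)]
  exact ⟨⟨u, rfl, mem_Sn.1 hu⟩, hcard⟩

lemma good_spec {n T k : ℕ} (h : good n T k = true) :
    ∃ w : BStr, strEnc w = k ∧ w.length = n ∧ (Bad n T w).card ≤ pM n := by
  unfold good at h
  rw [Bool.and_eq_true, isStr_iff, decide_eq_true_eq] at h
  obtain ⟨⟨w, rfl, hlen⟩, hle⟩ := h
  rw [badC_eq n T w hlen] at hle
  exact ⟨w, rfl, hlen, hle⟩



end LemmaOne


set_option maxHeartbeats 1000000 in
theorem lemma_one :
    ∃ c₁ : ℕ, ∀ t : ℕ → ℕ, Computable t → ∃ c₂ : ℕ, ∀ n : ℕ,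
      ∃ u v : BStr, u.length = n ∧ v.length = n ∧
        n - c₁ ≤ K v ∧
        n - c₂ ≤ Kcond v u ∧
        KcondNat u n ≤ c₂ ∧
        ((n - c₁ * Nat.log 2 n - c₂ : ℕ) : ℕ∞) ≤ KcondT t u v := by
  classical
  refine ⟨1, ?_⟩
  intro t ht
  have hq : Computable₂ (fun n k => LemmaOne.good n (t n) k) := by
    have h1 : Computable (fun p : ℕ × ℕ => ((p.1, t p.1), p.2)) :=
      (Computable.fst.pair (ht.comp Computable.fst)).pair Computable.snd
    have h2 : Computable (fun x : (ℕ × ℕ) × ℕ => LemmaOne.good x.1.1 x.1.2 x.2) :=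
      LemmaOne.primrec_good.to_comp
    have h3 := h2.comp h1
    exact h3
  have hex : ∀ n : ℕ, ∃ k, LemmaOne.good n (t n) k = true :=
    fun n => LemmaOne.good_exists n (t n)
  set F : ℕ → ℕ := fun n => Nat.find (hex n) with hF
  have hrf : Partrec (fun n => Part.some (F n) : ℕ →. ℕ) := by
    have h2 := Partrec.rfind
      (show Partrec₂ (fun (n k : ℕ) => (Part.some (LemmaOne.good n (t n) k) : Part Bool))
        from hq.partrec₂)
    apply h2.of_eq
    intro n
    rw [Part.eq_some_iff]
    exact Nat.mem_rfind.2 ⟨Part.mem_some_iff.2 (Nat.find_spec (hex n)).symm,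
      fun {m} hm => Part.mem_some_iff.2 (Bool.eq_false_iff.2 (Nat.find_min (hex n) hm)).symm⟩
  obtain ⟨c, hc⟩ := Nat.Partrec.Code.exists_code.1 (Partrec.nat_iff.1 hrf)
  set pcode := Encodable.encode c with hpcode
  set c₂ := max (plen pcode) 1 with hc₂
  have hc₂1 : 1 ≤ c₂ := le_max_right _ _
  refine ⟨c₂, ?_⟩
  intro n
  obtain ⟨u, huenc, hulen, hubad⟩ := LemmaOne.good_spec (Nat.find_spec (hex n))
  have hKu : KcondNat u n ≤ c₂ := by
    have huniv : univ pcode n = Part.some (strEnc u) := by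
      rw [hpcode, LemmaOne.univ_encode, hc, huenc]
    exact le_trans (LemmaOne.Knat_le huniv) (le_max_left _ _)
  by_cases hn : n ≤ 1
  · refine ⟨u, u, hulen, hulen, ?_, ?_, hKu, ?_⟩
    · have h0 : n - 1 = 0 := by omega
      rw [h0]; exact Nat.zero_le _
    · have h0 : n - c₂ = 0 := by omega
      rw [h0]; exact Nat.zero_le _
    · have h0 : n - 1 * Nat.log 2 n - c₂ = 0 := by
        have : Nat.log 2 n = 0 := Nat.log_of_lt (by omega)
        omega
      rw [h0]
      exact le_trans (by simp) zero_le
  · push_neg at hn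
    have hn2 : 2 ≤ n := hn
    set y0 := strEnc ([] : BStr) with hy0
    set ExcA := (LemmaOne.Sn n).filter (fun w => Knat (strEnc w) y0 < n - 1) with hExcA
    set ExcB := (LemmaOne.Sn n).filter (fun w => Knat (strEnc w) (strEnc u) < n - c₂) with hExcB
    set ExcC := LemmaOne.Bad n (t n) u with hExcC
    have hA : ExcA.card ≤ 2 ^ (n - 2) := by
      have h := LemmaOne.card_compressible n (n - 1) y0
      rw [show n - 1 - 1 = n - 2 by omega] at h
      exact h
    have hB : ExcB.card ≤ 2 ^ (n - 2) :=
      le_trans (LemmaOne.card_compressible n (n - c₂) (strEnc u))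
        (Nat.pow_le_pow_right (by norm_num) (by omega))
    have hC : ExcC.card ≤ 2 ^ (n - 2) := by
      refine le_trans hubad ?_
      unfold LemmaOne.pM
      rw [LemmaOne.plog_eq]
      apply Nat.pow_le_pow_right (by norm_num)
      have hlog : 0 < Nat.log 2 n := Nat.log_pos (by norm_num) (by omega)
      omega
    have hsub : ExcA ∪ ExcB ∪ ExcC ⊆ LemmaOne.Sn n := by
      apply Finset.union_subset (Finset.union_subset ?_ ?_) ?_
      · rw [hExcA]; exact Finset.filter_subset _ _
      · rw [hExcB]; exact Finset.filter_subset _ _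
      · intro w hw; exact (LemmaOne.mem_Bad.1 hw).1
    have hcardlt : (ExcA ∪ ExcB ∪ ExcC).card < (LemmaOne.Sn n).card := by
      rw [LemmaOne.card_Sn]
      have h1 : (ExcA ∪ ExcB ∪ ExcC).card ≤ (ExcA ∪ ExcB).card + ExcC.card :=
        Finset.card_union_le _ _
      have h2 : (ExcA ∪ ExcB).card ≤ ExcA.card + ExcB.card := Finset.card_union_le _ _
      have hj : 0 < 2 ^ (n - 2) := Nat.pow_pos (by norm_num)
      have h4 : 2 ^ n = 2 ^ (n - 2) * 4 := by
        rw [show n = (n - 2) + 2 by omega, pow_add]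
        rw [show (n - 2) + 2 - 2 = n - 2 by omega]
        norm_num
      omega
    have hnonempty : ∃ v, v ∈ LemmaOne.Sn n \ (ExcA ∪ ExcB ∪ ExcC) := by
      have hpos : 0 < (LemmaOne.Sn n \ (ExcA ∪ ExcB ∪ ExcC)).card := by
        rw [Finset.card_sdiff_of_subset hsub]
        omega
      obtain ⟨v, hv⟩ := Finset.card_pos.1 hpos
      exact ⟨v, hv⟩
    obtain ⟨v, hv⟩ := hnonempty
    obtain ⟨hvS, hvE⟩ := Finset.mem_sdiff.1 hv
    have hvlen := LemmaOne.mem_Sn.1 hvS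
    refine ⟨u, v, hulen, hvlen, ?_, ?_, hKu, ?_⟩
    · by_contra h
      push_neg at h
      exact hvE (Finset.mem_union_left _ (Finset.mem_union_left _
        (Finset.mem_filter.2 ⟨hvS, h⟩)))
    · by_contra h
      push_neg at h
      exact hvE (Finset.mem_union_left _ (Finset.mem_union_right _
        (Finset.mem_filter.2 ⟨hvS, h⟩)))
    · apply le_sInf
      rintro b ⟨p, rfl, hp⟩
      rw [Nat.cast_le]
      by_contra hlt
      push_neg at hlt
      have hplt : plen p < n - Nat.log 2 n := by omega
      have hpM : p < LemmaOne.pM n := by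
        unfold LemmaOne.pM
        rw [LemmaOne.plog_eq]
        exact LemmaOne.plen_lt_pow hplt
      apply hvE
      refine Finset.mem_union_right _ (LemmaOne.mem_Bad.2 ⟨hvS, p, hpM, ?_⟩)
      rw [hulen] at hp
      exact hp
end

section
/- For every length n and computable time bound t with t(n) ≥ cn for a large enough constant c, there exist strings v and w of length n such that K(v) ≥ n - c₁, E(v,w) ≤ c₃, and E^t(v,w) ≥ n - c₁·log n - c₃, where c₃ depends on t but not on n and c₁ is independent of t and n. -/
namespace LemXor

open Nat.Partrec (Code)
open Nat.Partrec.Code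

/-- the `i`-th string of length `n` -/
def toBits (n i : ℕ) : List Bool := (List.range n).map fun k => decide (i / 2 ^ k % 2 = 1)

def idx (l : List Bool) : ℕ := l.foldr (fun b acc => 2 * acc + cond b 1 0) 0

@[simp] lemma toBits_length (n i : ℕ) : (toBits n i).length = n := by simp [toBits]

lemma toBits_succ (n i : ℕ) :
    toBits (n + 1) i = decide (i % 2 = 1) :: toBits n (i / 2) := by
  simp only [toBits, List.range_succ_eq_map, List.map_cons, List.map_map, pow_zero, Nat.div_one]
  refine congrArg₂ _ rfl ?_
  refine List.map_congr_left fun k _ => ?_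
  simp [Function.comp, Nat.div_div_eq_div_mul, pow_succ']

lemma idx_toBits {n i : ℕ} (h : i < 2 ^ n) : idx (toBits n i) = i := by
  induction n generalizing i with
  | zero =>
      have : i = 0 := by simpa using h
      subst this; rfl
  | succ n ih =>
      have h2 : i / 2 < 2 ^ n := by
        have : (2:ℕ) ^ (n+1) = 2 ^ n * 2 := by ring
        omega
      rw [toBits_succ]
      have : idx (decide (i % 2 = 1) :: toBits n (i / 2))
          = 2 * idx (toBits n (i / 2)) + cond (decide (i % 2 = 1)) 1 0 := rfl
      rw [this, ih h2]
      rcases Nat.mod_two_eq_zero_or_one i with h3 | h3 <;> simp [h3] <;> omega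

lemma toBits_inj {n i i' : ℕ} (hi : i < 2 ^ n) (hi' : i' < 2 ^ n)
    (h : toBits n i = toBits n i') : i = i' := by
  rw [← idx_toBits hi, ← idx_toBits hi', h]

def chk (τ n p i j : ℕ) : Bool :=
  decide (univT τ p (strEnc (toBits n i)) = some (strEnc (toBits n ((i + j) % 2 ^ n))))

lemma chk_iff {τ n p i j : ℕ} : chk τ n p i j = true ↔
    univT τ p (strEnc (toBits n i)) = some (strEnc (toBits n ((i + j) % 2 ^ n))) := by
  simp [chk]

def lsum (l : List ℕ) : ℕ := l.foldr (· + ·) 0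

lemma foldr_add (l : List ℕ) (a : ℕ) : l.foldr (· + ·) a = lsum l + a := by
  induction l with
  | nil => simp [lsum]
  | cons b l ih =>
      have h1 : lsum (b :: l) = b + lsum l := rfl
      simp only [List.foldr_cons, ih, h1]; omega

lemma lsum_map_range (f : ℕ → ℕ) (N : ℕ) :
    lsum ((List.range N).map f) = ∑ k ∈ Finset.range N, f k := by
  induction N with
  | zero => rfl
  | succ n ih =>
      rw [List.range_succ, List.map_append, Finset.sum_range_succ, ← ih]
      show (((List.range n).map f) ++ [f n]).foldr (· + ·) 0
          = lsum ((List.range n).map f) + f n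
      rw [List.foldr_append, List.foldr_cons, List.foldr_nil, foldr_add]
      omega

def cnt (τ n j : ℕ) : ℕ :=
  lsum ((List.range (2 ^ (n - 2))).map fun p =>
    lsum ((List.range (2 ^ n)).map fun i => cond (chk τ n p i j) 1 0))

lemma cnt_eq (τ n j : ℕ) : cnt τ n j =
    ∑ p ∈ Finset.range (2 ^ (n - 2)),
      ((Finset.range (2 ^ n)).filter fun i => chk τ n p i j = true).card := by
  rw [cnt, lsum_map_range]
  refine Finset.sum_congr rfl fun p _ => ?_
  rw [lsum_map_range, Finset.card_filter]
  refine Finset.sum_congr rfl fun i _ => ?_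
  by_cases h : chk τ n p i j <;> simp [h]

lemma exists_small_cnt (τ n : ℕ) : ∃ j < 2 ^ n, cnt τ n j ≤ 2 ^ (n - 2) := by
  by_contra hc
  push_neg at hc
  have hsum : ∑ j ∈ Finset.range (2 ^ n), cnt τ n j ≤ 2 ^ (n - 2) * 2 ^ n := by
    simp only [cnt_eq]
    rw [Finset.sum_comm]
    refine le_trans (Finset.sum_le_sum fun p _ => ?_)
      (by rw [Finset.sum_const, Finset.card_range, smul_eq_mul])
    -- for fixed p the sets are pairwise disjoint
    have hdisj : ∀ j ∈ Finset.range (2 ^ n), ∀ j' ∈ Finset.range (2 ^ n), j ≠ j' →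
        Disjoint ((Finset.range (2 ^ n)).filter fun i => chk τ n p i j = true)
          ((Finset.range (2 ^ n)).filter fun i => chk τ n p i j' = true) := by
      intro j hj j' hj' hne
      rw [Finset.disjoint_left]
      intro i hi hi'
      simp only [Finset.mem_filter, Finset.mem_range] at hi hi' hj hj'
      apply hne
      have e1 := chk_iff.1 hi.2
      have e2 := chk_iff.1 hi'.2
      rw [e1] at e2
      have e3 : strEnc (toBits n ((i + j) % 2 ^ n)) = strEnc (toBits n ((i + j') % 2 ^ n)) := by
        simpa using e2
      have e4 := Encodable.encode_injective e3
      have hpos : 0 < 2 ^ n := pow_pos (by norm_num) n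
      have e5 : (i + j) % 2 ^ n = (i + j') % 2 ^ n :=
        toBits_inj (Nat.mod_lt _ hpos) (Nat.mod_lt _ hpos) e4
      have e6 : j ≡ j' [MOD 2 ^ n] :=
        Nat.ModEq.add_left_cancel (Nat.ModEq.refl i) e5
      have e7 := e6.eq_of_lt_of_lt hj hj'
      exact e7
    rw [← Finset.card_biUnion hdisj]
    calc ((Finset.range (2 ^ n)).biUnion fun j =>
          (Finset.range (2 ^ n)).filter fun i => chk τ n p i j = true).card
        ≤ (Finset.range (2 ^ n)).card := Finset.card_le_card (by
          intro x hx
          simp only [Finset.mem_biUnion, Finset.mem_filter] at hx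
          obtain ⟨j, _, hx, _⟩ := hx
          exact hx)
      _ = 2 ^ n := Finset.card_range _
  have hlb : 2 ^ n * (2 ^ (n - 2) + 1) ≤ ∑ j ∈ Finset.range (2 ^ n), cnt τ n j := by
    calc 2 ^ n * (2 ^ (n - 2) + 1) = ∑ _j ∈ Finset.range (2 ^ n), (2 ^ (n - 2) + 1) := by
          rw [Finset.sum_const, Finset.card_range, smul_eq_mul]
      _ ≤ _ := Finset.sum_le_sum fun j hj => hc j (Finset.mem_range.1 hj)
  have hpos : 0 < 2 ^ n := pow_pos (by norm_num) n
  nlinarith [hsum, hlb]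

def uIdx (τ n : ℕ) : ℕ :=
  (List.range (2 ^ n)).findIdx fun j => decide (cnt τ n j ≤ 2 ^ (n - 2))

lemma uIdx_lt (τ n : ℕ) : uIdx τ n < 2 ^ n := by
  obtain ⟨j, hj, hc⟩ := exists_small_cnt τ n
  have := List.findIdx_lt_length_of_exists (xs := List.range (2 ^ n))
    (p := fun j => decide (cnt τ n j ≤ 2 ^ (n - 2)))
    ⟨j, by simpa using hj, by simpa using hc⟩
  simpa [uIdx] using this

lemma cnt_uIdx_le (τ n : ℕ) : cnt τ n (uIdx τ n) ≤ 2 ^ (n - 2) := by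
  have hlt : (List.range (2 ^ n)).findIdx
      (fun j => decide (cnt τ n j ≤ 2 ^ (n - 2))) < (List.range (2 ^ n)).length := by
    simpa [uIdx] using uIdx_lt τ n
  have := List.findIdx_getElem (w := hlt)
  simpa [uIdx, List.getElem_range] using this



lemma exists_good (τ n : ℕ) (hn : 1 ≤ n) :
    ∃ i < 2 ^ n,
      (∀ p, plen p < n - 1 → univ p (strEnc ([] : BStr)) ≠ Part.some (strEnc (toBits n i))) ∧
      (∀ p < 2 ^ (n - 2), chk τ n p i (uIdx τ n) ≠ true) := by
  classical
  set M := 2 ^ n with hM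
  set badK := (Finset.range M).filter
    (fun i => ∃ p, plen p < n - 1 ∧ univ p (strEnc ([] : BStr)) = Part.some (strEnc (toBits n i)))
    with hbadK
  set badT := (Finset.range M).filter
    (fun i => ∃ p < 2 ^ (n - 2), chk τ n p i (uIdx τ n) = true) with hbadT
  have hiM : ∀ i ∈ badK, i < M := fun i hi => Finset.mem_range.1 (Finset.mem_filter.1 hi).1
  have hKcard : badK.card ≤ 2 ^ (n - 2) := by
    have h := Finset.card_le_card_of_injOn (s := badK)
      (f := fun i => sInf {p | plen p < n - 1 ∧
        univ p (strEnc ([] : BStr)) = Part.some (strEnc (toBits n i))})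
      (t := Finset.range (2 ^ (n - 2))) ?_ ?_
    · simpa using h
    · intro i hi
      obtain ⟨-, p, hp1, hp2⟩ := Finset.mem_filter.1 hi
      obtain ⟨hq1, hq2⟩ := Nat.sInf_mem (⟨p, hp1, hp2⟩ : {p | plen p < n - 1 ∧
        univ p (strEnc ([] : BStr)) = Part.some (strEnc (toBits n i))}.Nonempty)
      refine Finset.mem_range.2 ?_
      have h2 : plen (sInf {p | plen p < n - 1 ∧
          univ p (strEnc ([] : BStr)) = Part.some (strEnc (toBits n i))}) ≤ n - 2 := by omega
      exact Nat.size_le.1 h2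
    · intro i hi i' hi' heq
      simp only [Finset.mem_coe] at hi hi'
      obtain ⟨him, p, hp1, hp2⟩ := Finset.mem_filter.1 hi
      obtain ⟨hi'm, p', hp'1, hp'2⟩ := Finset.mem_filter.1 hi'
      obtain ⟨hq1, hq2⟩ := Nat.sInf_mem (⟨p, hp1, hp2⟩ : {p | plen p < n - 1 ∧
        univ p (strEnc ([] : BStr)) = Part.some (strEnc (toBits n i))}.Nonempty)
      obtain ⟨hq'1, hq'2⟩ := Nat.sInf_mem (⟨p', hp'1, hp'2⟩ : {p | plen p < n - 1 ∧
        univ p (strEnc ([] : BStr)) = Part.some (strEnc (toBits n i'))}.Nonempty)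
      simp only [] at heq
      rw [heq] at hq2
      rw [hq2] at hq'2
      have henc := Part.some_inj.1 hq'2
      exact toBits_inj (Finset.mem_range.1 him) (Finset.mem_range.1 hi'm)
        (Encodable.encode_injective henc)
  have hTcard : badT.card ≤ 2 ^ (n - 2) := by
    have hsub : badT ⊆ (Finset.range (2 ^ (n - 2))).biUnion
        (fun p => (Finset.range M).filter fun i => chk τ n p i (uIdx τ n) = true) := by
      intro i hi
      obtain ⟨him, p, hp1, hp2⟩ := Finset.mem_filter.1 hi
      exact Finset.mem_biUnion.2 ⟨p, Finset.mem_range.2 hp1, Finset.mem_filter.2 ⟨him, hp2⟩⟩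
    calc badT.card ≤ _ := Finset.card_le_card hsub
      _ ≤ ∑ p ∈ Finset.range (2 ^ (n - 2)),
          ((Finset.range M).filter fun i => chk τ n p i (uIdx τ n) = true).card :=
        Finset.card_biUnion_le
      _ = cnt τ n (uIdx τ n) := (cnt_eq τ n _).symm
      _ ≤ 2 ^ (n - 2) := cnt_uIdx_le τ n
  have hcard : badK.card + badT.card < M := by
    rcases eq_or_lt_of_le hn with h1 | h2
    · -- n = 1 : badK is empty
      have hempty : badK = ∅ := by
        rw [Finset.eq_empty_iff_forall_notMem]
        intro i hi
        obtain ⟨-, p, hp1, -⟩ := Finset.mem_filter.1 hi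
        omega
      subst h1
      have ht2 : badT.card ≤ 1 := by simpa using hTcard
      have hM2 : M = 2 := by rw [hM]; norm_num
      rw [hempty]
      simp only [Finset.card_empty, zero_add]
      omega
    · have h3 : (2:ℕ) ^ (n - 2) + 2 ^ (n - 2) = 2 ^ (n - 1) := by
        have : n - 1 = (n - 2) + 1 := by omega
        rw [this, pow_succ]; ring
      have h4 : (2:ℕ) ^ (n - 1) < 2 ^ n :=
        Nat.pow_lt_pow_right (by norm_num) (by omega)
      omega
  by_contra hno
  push_neg at hno
  have hsub : Finset.range M ⊆ badK ∪ badT := by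
    intro i hi
    have hiM := Finset.mem_range.1 hi
    rcases Classical.em (∀ p, plen p < n - 1 →
        univ p (strEnc ([] : BStr)) ≠ Part.some (strEnc (toBits n i))) with hA | hA
    · obtain ⟨p, hp1, hp2⟩ := hno i hiM hA
      exact Finset.mem_union_right _ (Finset.mem_filter.2 ⟨hi, p, hp1, hp2⟩)
    · push_neg at hA
      obtain ⟨p, hp1, hp2⟩ := hA
      exact Finset.mem_union_left _ (Finset.mem_filter.2 ⟨hi, p, hp1, hp2⟩)
  have := Finset.card_le_card hsub
  have hcd := Finset.card_union_le badK badT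
  rw [Finset.card_range] at this
  omega



def decS (y : ℕ) : List Bool := (Encodable.decode (α := List Bool) y).getD []

lemma primrec_decS : Primrec decS :=
  Primrec.option_getD.comp Primrec.decode (Primrec.const [])

@[simp] lemma decS_strEnc (l : BStr) : decS (strEnc l) = l := by
  simp [decS, strEnc, Encodable.encodek]

def H1 (z : ℕ × ℕ) : ℕ :=
  strEnc (toBits (decS z.1).length
    ((idx (decS z.1) + uIdx z.2 (decS z.1).length) % 2 ^ (decS z.1).length))

def H2 (z : ℕ × ℕ) : ℕ :=
  strEnc (toBits (decS z.1).length
    ((idx (decS z.1) + (2 ^ (decS z.1).length - uIdx z.2 (decS z.1).length))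
      % 2 ^ (decS z.1).length))

def F1 (t : ℕ → ℕ) (y : ℕ) : ℕ := H1 (y, t (decS y).length)

def F2 (t : ℕ → ℕ) (y : ℕ) : ℕ := H2 (y, t (decS y).length)

lemma F1_apply (t : ℕ → ℕ) {n i : ℕ} (hi : i < 2 ^ n) :
    F1 t (strEnc (toBits n i)) = strEnc (toBits n ((i + uIdx (t n) n) % 2 ^ n)) := by
  simp [F1, H1, toBits_length, idx_toBits hi]

lemma F2_apply (t : ℕ → ℕ) {n i : ℕ} (hi : i < 2 ^ n) :
    F2 t (strEnc (toBits n ((i + uIdx (t n) n) % 2 ^ n))) = strEnc (toBits n i) := by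
  have hj := uIdx_lt (t n) n
  have hpos : 0 < 2 ^ n := pow_pos (by norm_num) n
  have h1 : (i + uIdx (t n) n) % 2 ^ n < 2 ^ n := Nat.mod_lt _ hpos
  simp only [F2, H2, decS_strEnc, toBits_length, idx_toBits h1]
  congr 2
  rw [Nat.mod_add_mod]
  have h2 : i + uIdx (t n) n + (2 ^ n - uIdx (t n) n) = i + 2 ^ n := by omega
  rw [h2, Nat.add_mod_right, Nat.mod_eq_of_lt hi]

lemma K_ge {n i : ℕ}
    (hgood : ∀ p, plen p < n - 1 → univ p (strEnc ([] : BStr)) ≠ Part.some (strEnc (toBits n i))) :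
    n - 1 ≤ K (toBits n i) := by
  have hne : {m | ∃ p, plen p = m ∧
      univ p (strEnc ([] : BStr)) = Part.some (strEnc (toBits n i))}.Nonempty := by
    refine ⟨plen (Encodable.encode (Code.const (strEnc (toBits n i)))),
      Encodable.encode (Code.const (strEnc (toBits n i))), rfl, ?_⟩
    simp [univ, Denumerable.ofNat_encode, eval_const]
  obtain ⟨p, hp, hrun⟩ := Nat.sInf_mem hne
  exact le_of_not_gt fun hlt => hgood p (hp ▸ hlt) hrun

lemma KcondT_ge {t : ℕ → ℕ} {n i : ℕ}
    (hT : ∀ p < 2 ^ (n - 2), chk (t n) n p i (uIdx (t n) n) ≠ true) :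
    ((n - 2 : ℕ) : ℕ∞) ≤ KcondT t (toBits n ((i + uIdx (t n) n) % 2 ^ n)) (toBits n i) := by
  refine le_sInf fun k hk => ?_
  obtain ⟨p, hpk, hrun⟩ := hk
  rw [← hpk, Nat.cast_le]
  by_contra hlt
  push_neg at hlt
  have hp2 : p < 2 ^ (n - 2) := Nat.size_le.1 (le_of_lt hlt)
  refine hT p hp2 ?_
  rw [chk_iff]
  rw [toBits_length] at hrun
  exact hrun

lemma exists_code_of_computable {f : ℕ → ℕ} (hf : Computable f) :
    ∃ c : Code, ∀ y, c.eval y = Part.some (f y) := by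
  obtain ⟨c, hc⟩ := exists_code.1 (Partrec.nat_iff.1 hf.partrec)
  exact ⟨c, fun y => by rw [hc]; rfl⟩

lemma primrec_pow : Primrec₂ ((· ^ ·) : ℕ → ℕ → ℕ) := by
  have h : Primrec (Nat.unpaired ((· ^ ·) : ℕ → ℕ → ℕ)) := Primrec.nat_iff.2 Nat.Primrec.pow
  have h2 : Primrec (fun p : ℕ × ℕ => Nat.unpaired ((· ^ ·) : ℕ → ℕ → ℕ) (Nat.pair p.1 p.2)) :=
    h.comp Primrec₂.natPair
  have h3 : Primrec fun p : ℕ × ℕ => p.1 ^ p.2 := h2.of_eq fun p => by simp [Nat.unpaired]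
  exact h3

lemma primrec_toBits : Primrec₂ toBits := by
  have hg : Primrec₂ (fun (a : ℕ × ℕ) (k : ℕ) => decide (a.2 / 2 ^ k % 2 = 1)) := by
    apply PrimrecPred.decide
    apply PrimrecRel.comp (Primrec.eq (α := ℕ))
    · exact Primrec.nat_mod.comp
        (Primrec.nat_div.comp (Primrec.snd.comp Primrec.fst)
          (primrec_pow.comp (Primrec.const 2) Primrec.snd))
        (Primrec.const 2)
    · exact Primrec.const 1
  exact (Primrec.list_map (Primrec.list_range.comp Primrec.fst) hg).to₂

lemma primrec_idx : Primrec idx := by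
  apply Primrec.list_foldr (Primrec.id) (Primrec.const 0)
    (h := fun _ (p : Bool × ℕ) => 2 * p.2 + cond p.1 1 0)
  exact (Primrec.nat_add.comp
    (Primrec.nat_mul.comp (Primrec.const 2) (Primrec.snd.comp Primrec.snd))
    (Primrec.cond (Primrec.fst.comp Primrec.snd) (Primrec.const 1) (Primrec.const 0))).to₂

lemma primrec_strEnc : Primrec strEnc := Primrec.encode

lemma primrec_chk :
    Primrec fun z : (ℕ × ℕ) × ℕ × ℕ × ℕ => chk z.1.1 z.1.2 z.2.1 z.2.2.1 z.2.2.2 := by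
  -- z = ((τ, n), (p, i, j))
  have hτ : Primrec fun z : (ℕ × ℕ) × ℕ × ℕ × ℕ => z.1.1 := Primrec.fst.comp Primrec.fst
  have hn : Primrec fun z : (ℕ × ℕ) × ℕ × ℕ × ℕ => z.1.2 := Primrec.snd.comp Primrec.fst
  have hp : Primrec fun z : (ℕ × ℕ) × ℕ × ℕ × ℕ => z.2.1 := Primrec.fst.comp Primrec.snd
  have hi : Primrec fun z : (ℕ × ℕ) × ℕ × ℕ × ℕ => z.2.2.1 :=
    Primrec.fst.comp (Primrec.snd.comp Primrec.snd)
  have hj : Primrec fun z : (ℕ × ℕ) × ℕ × ℕ × ℕ => z.2.2.2 :=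
    Primrec.snd.comp (Primrec.snd.comp Primrec.snd)
  have huT : Primrec fun z : (ℕ × ℕ) × ℕ × ℕ × ℕ =>
      univT z.1.1 z.2.1 (strEnc (toBits z.1.2 z.2.2.1)) := by
    have := primrec_evaln.comp
      ((hτ.pair ((Primrec.ofNat Code).comp hp)).pair
        (primrec_strEnc.comp (primrec_toBits.comp hn hi)))
    exact this
  have hout : Primrec fun z : (ℕ × ℕ) × ℕ × ℕ × ℕ =>
      (some (strEnc (toBits z.1.2 ((z.2.2.1 + z.2.2.2) % 2 ^ z.1.2))) : Option ℕ) := by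
    exact Primrec.option_some.comp (primrec_strEnc.comp (primrec_toBits.comp hn
      (Primrec.nat_mod.comp (Primrec.nat_add.comp hi hj)
        (primrec_pow.comp (Primrec.const 2) hn))))
  have h := PrimrecRel.comp (Primrec.eq (α := Option ℕ)) huT hout
  unfold chk
  exact h.decide

lemma primrec_lsum : Primrec lsum := by
  apply Primrec.list_foldr (Primrec.id) (Primrec.const 0)
    (h := fun _ (p : ℕ × ℕ) => p.1 + p.2)
  exact (Primrec.nat_add.comp (Primrec.fst.comp Primrec.snd)
    (Primrec.snd.comp Primrec.snd)).to₂

set_option maxHeartbeats 1000000 in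
lemma primrec_cnt_inner : Primrec₂ fun (w : ((ℕ × ℕ) × ℕ) × ℕ) (i : ℕ) =>
    cond (chk w.1.1.1 w.1.1.2 w.2 i w.1.2) 1 0 := by
  -- q = (w, i) with w = (((τ, n), j), p)
  have a0 : Primrec fun q : ((((ℕ × ℕ) × ℕ) × ℕ) × ℕ) => q.1.1.1 :=
    Primrec.fst.comp (Primrec.fst.comp Primrec.fst)
  have aτ : Primrec fun q : ((((ℕ × ℕ) × ℕ) × ℕ) × ℕ) => q.1.1.1.1 := Primrec.fst.comp a0
  have an : Primrec fun q : ((((ℕ × ℕ) × ℕ) × ℕ) × ℕ) => q.1.1.1.2 := Primrec.snd.comp a0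
  have aj : Primrec fun q : ((((ℕ × ℕ) × ℕ) × ℕ) × ℕ) => q.1.1.2 :=
    Primrec.snd.comp (Primrec.fst.comp Primrec.fst)
  have ap : Primrec fun q : ((((ℕ × ℕ) × ℕ) × ℕ) × ℕ) => q.1.2 := Primrec.snd.comp Primrec.fst
  have ai : Primrec fun q : ((((ℕ × ℕ) × ℕ) × ℕ) × ℕ) => q.2 := Primrec.snd
  have hc : Primrec fun q : ((((ℕ × ℕ) × ℕ) × ℕ) × ℕ) =>
      chk q.1.1.1.1 q.1.1.1.2 q.1.2 q.2 q.1.1.2 :=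
    primrec_chk.comp ((aτ.pair an).pair (ap.pair (ai.pair aj)))
  exact (Primrec.cond hc (Primrec.const 1) (Primrec.const 0)).to₂

set_option maxHeartbeats 1000000 in
lemma primrec_cnt_outer : Primrec₂ fun (z : (ℕ × ℕ) × ℕ) (p : ℕ) =>
    lsum ((List.range (2 ^ z.1.2)).map fun i =>
      cond (chk z.1.1 z.1.2 p i z.2) 1 0) := by
  have hf : Primrec fun w : ((ℕ × ℕ) × ℕ) × ℕ => List.range (2 ^ w.1.1.2) :=
    Primrec.list_range.comp (primrec_pow.comp (Primrec.const 2)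
      (Primrec.snd.comp (Primrec.fst.comp Primrec.fst)))
  have h := primrec_lsum.comp (Primrec.list_map
    (g := fun (w : ((ℕ × ℕ) × ℕ) × ℕ) (i : ℕ) => cond (chk w.1.1.1 w.1.1.2 w.2 i w.1.2) 1 0)
    hf primrec_cnt_inner)
  exact h.to₂

set_option maxHeartbeats 1000000 in
lemma primrec_cnt : Primrec fun z : (ℕ × ℕ) × ℕ => cnt z.1.1 z.1.2 z.2 := by
  have hn : Primrec fun z : (ℕ × ℕ) × ℕ => z.1.2 := Primrec.snd.comp Primrec.fst
  have hf : Primrec fun z : (ℕ × ℕ) × ℕ => List.range (2 ^ (z.1.2 - 2)) :=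
    Primrec.list_range.comp (primrec_pow.comp (Primrec.const 2)
      (Primrec.nat_sub.comp hn (Primrec.const 2)))
  have h := primrec_lsum.comp (Primrec.list_map
    (g := fun (z : (ℕ × ℕ) × ℕ) (p : ℕ) => lsum ((List.range (2 ^ z.1.2)).map fun i =>
      cond (chk z.1.1 z.1.2 p i z.2) 1 0))
    hf primrec_cnt_outer)
  exact h.of_eq fun z => rfl

lemma primrec_uIdx : Primrec₂ uIdx := by
  have hcond : Primrec₂ fun (a : ℕ × ℕ) (j : ℕ) => decide (cnt a.1 a.2 j ≤ 2 ^ (a.2 - 2)) := by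
    apply PrimrecPred.decide
    apply PrimrecRel.comp Primrec.nat_le
    · exact primrec_cnt.comp (Primrec.fst.pair Primrec.snd)
    · exact primrec_pow.comp (Primrec.const 2)
        (Primrec.nat_sub.comp (Primrec.snd.comp Primrec.fst) (Primrec.const 2))
  have := Primrec.list_findIdx
    (f := fun a : ℕ × ℕ => List.range (2 ^ a.2))
    (Primrec.list_range.comp (primrec_pow.comp (Primrec.const 2) Primrec.snd)) hcond
  exact this.to₂

lemma primrec_H1 : Primrec H1 := by
  have hl : Primrec fun z : ℕ × ℕ => decS z.1 := primrec_decS.comp Primrec.fst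
  have hL : Primrec fun z : ℕ × ℕ => (decS z.1).length := Primrec.list_length.comp hl
  have hpw : Primrec fun z : ℕ × ℕ => 2 ^ (decS z.1).length :=
    primrec_pow.comp (Primrec.const 2) hL
  have hu : Primrec fun z : ℕ × ℕ => uIdx z.2 (decS z.1).length :=
    primrec_uIdx.comp Primrec.snd hL
  exact primrec_strEnc.comp (primrec_toBits.comp hL
    (Primrec.nat_mod.comp (Primrec.nat_add.comp (primrec_idx.comp hl) hu) hpw))

lemma primrec_H2 : Primrec H2 := by
  have hl : Primrec fun z : ℕ × ℕ => decS z.1 := primrec_decS.comp Primrec.fst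
  have hL : Primrec fun z : ℕ × ℕ => (decS z.1).length := Primrec.list_length.comp hl
  have hpw : Primrec fun z : ℕ × ℕ => 2 ^ (decS z.1).length :=
    primrec_pow.comp (Primrec.const 2) hL
  have hu : Primrec fun z : ℕ × ℕ => uIdx z.2 (decS z.1).length :=
    primrec_uIdx.comp Primrec.snd hL
  exact primrec_strEnc.comp (primrec_toBits.comp hL
    (Primrec.nat_mod.comp
      (Primrec.nat_add.comp (primrec_idx.comp hl) (Primrec.nat_sub.comp hpw hu)) hpw))

lemma computable_F1 {t : ℕ → ℕ} (ht : Computable t) : Computable (F1 t) := by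
  have h1 : Computable fun y : ℕ => t (decS y).length :=
    ht.comp (Primrec.list_length.comp primrec_decS).to_comp
  exact primrec_H1.to_comp.comp (Computable.id.pair h1)

lemma computable_F2 {t : ℕ → ℕ} (ht : Computable t) : Computable (F2 t) := by
  have h1 : Computable fun y : ℕ => t (decS y).length :=
    ht.comp (Primrec.list_length.comp primrec_decS).to_comp
  exact primrec_H2.to_comp.comp (Computable.id.pair h1)

lemma E_le {t : ℕ → ℕ} {c1 c2 : Code}
    (hc1 : ∀ y, c1.eval y = Part.some (F1 t y)) (hc2 : ∀ y, c2.eval y = Part.some (F2 t y))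
    {n i : ℕ} (hi : i < 2 ^ n) :
    E (toBits n i) (toBits n ((i + uIdx (t n) n) % 2 ^ n)) ≤
      plen (Encodable.encode c1) + plen (Encodable.encode c2) + 2 := by
  apply max_le
  · have hm : plen (Encodable.encode c2) ∈ {m | ∃ p, plen p = m ∧
        univ p (strEnc (toBits n ((i + uIdx (t n) n) % 2 ^ n)))
          = Part.some (strEnc (toBits n i))} := by
      refine ⟨Encodable.encode c2, rfl, ?_⟩
      rw [univ, Denumerable.ofNat_encode, hc2, F2_apply t hi]
    exact le_trans (Nat.sInf_le hm) (by omega)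
  · have hm : plen (Encodable.encode c1) ∈ {m | ∃ p, plen p = m ∧
        univ p (strEnc (toBits n i))
          = Part.some (strEnc (toBits n ((i + uIdx (t n) n) % 2 ^ n)))} := by
      refine ⟨Encodable.encode c1, rfl, ?_⟩
      rw [univ, Denumerable.ofNat_encode, hc1, F1_apply t hi]
    exact le_trans (Nat.sInf_le hm) (by omega)

end LemXor

theorem lemma_xor :
    ∃ c c₁ : ℕ, ∀ t : ℕ → ℕ, Computable t → (∀ n, c * n ≤ t n) →
      ∃ c₃ : ℕ, ∀ n : ℕ, ∃ v w : BStr, v.length = n ∧ w.length = n ∧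
        n - c₁ ≤ K v ∧
        E v w ≤ c₃ ∧
        ((n - c₁ * Nat.log 2 n - c₃ : ℕ) : ℕ∞) ≤ ET t v w := by
  refine ⟨1, 1, fun t ht _ => ?_⟩
  obtain ⟨c1, hc1⟩ := LemXor.exists_code_of_computable (LemXor.computable_F1 ht)
  obtain ⟨c2, hc2⟩ := LemXor.exists_code_of_computable (LemXor.computable_F2 ht)
  refine ⟨plen (Encodable.encode c1) + plen (Encodable.encode c2) + 2, fun n => ?_⟩
  rcases Nat.eq_zero_or_pos n with rfl | hn
  · refine ⟨LemXor.toBits 0 0, LemXor.toBits 0 ((0 + LemXor.uIdx (t 0) 0) % 2 ^ 0),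
      LemXor.toBits_length _ _, LemXor.toBits_length _ _, by simp,
      LemXor.E_le hc1 hc2 (by norm_num), ?_⟩
    simp
  · obtain ⟨i, hiM, hKg, hTg⟩ := LemXor.exists_good (t n) n hn
    refine ⟨LemXor.toBits n i, LemXor.toBits n ((i + LemXor.uIdx (t n) n) % 2 ^ n),
      LemXor.toBits_length _ _, LemXor.toBits_length _ _, LemXor.K_ge hKg,
      LemXor.E_le hc1 hc2 hiM, ?_⟩
    have h1 := LemXor.KcondT_ge (t := t) (n := n) (i := i) hTg
    have h2 : ((n - 1 * Nat.log 2 n - (plen (Encodable.encode c1) +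
        plen (Encodable.encode c2) + 2) : ℕ) : ℕ∞) ≤ ((n - 2 : ℕ) : ℕ∞) :=
      Nat.cast_le.2 (by omega)
    exact le_trans (le_trans h2 h1) (le_max_right _ _)
end
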